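/- Let d ≥ 2 be an integer. Then lim_{r→∞} r^{d−1}·W^(d)(r) = 2/(Γ(d)·π·vol(S^{d−1})). -/

import Mathlib

open MeasureTheory Filter

open Real Set

/-- The limiting profile `U`. -/
noncomputable def U (r : ℝ) : ℝ :=
  if r ≤ 1 then 1 / 2 else 1 / 2 - Real.arccos (1 / r) / Real.pi

lemma measurable_U : Measurable U := by
  unfold U
  exact Measurable.ite (measurableSet_le measurable_id measurable_const) measurable_const
    (measurable_const.sub ((Real.continuous_arccos.measurable.comp
      (measurable_const.div measurable_id)).div_const _))

lemma U_eq {x : ℝ} (hx : 1 ≤ x) : U x = Real.arcsin (1 / x) / Real.pi := by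
  rcases eq_or_lt_of_le hx with h | h
  · rw [U, if_pos h.symm.le, ← h]
    norm_num
    field_simp
  · rw [U, if_neg (by linarith), Real.arccos_eq_pi_div_two_sub_arcsin]
    field_simp
    ring

lemma arcsin_le_pi_div_two_mul {y : ℝ} (hy : 0 ≤ y) (hy' : y ≤ 1) :
    Real.arcsin y ≤ Real.pi / 2 * y := by
  have h1 := Real.mul_le_sin (Real.arcsin_nonneg.2 hy) (Real.arcsin_le_pi_div_two y)
  rw [Real.sin_arcsin (by linarith) hy'] at h1
  have hπ := Real.pi_pos
  calc Real.arcsin y = Real.pi / 2 * (2 / Real.pi * Real.arcsin y) := by field_simp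
    _ ≤ Real.pi / 2 * y := by nlinarith

lemma U_nonneg {x : ℝ} (hx : 0 ≤ x) : 0 ≤ U x := by
  rcases le_or_gt x 1 with h | h
  · rw [U, if_pos h]; norm_num
  · rw [U_eq h.le]
    exact div_nonneg (Real.arcsin_nonneg.2 (by positivity)) Real.pi_pos.le

lemma U_mul_le {x : ℝ} (hx : 0 ≤ x) : U x * x ≤ 1 / 2 := by
  rcases le_or_gt x 1 with h | h
  · rw [U, if_pos h]; linarith
  · rw [U_eq h.le]
    have h0 : (0:ℝ) < x := by linarith
    have h1 : Real.arcsin (1 / x) ≤ Real.pi / 2 * (1 / x) :=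
      arcsin_le_pi_div_two_mul (by positivity) (by rw [div_le_one h0]; linarith)
    have hπ := Real.pi_pos
    have h2 : Real.arcsin (1 / x) * x ≤ Real.pi / 2 := by
      have h3 : (Real.pi / 2 * (1 / x)) * x = Real.pi / 2 := by field_simp
      nlinarith
    rw [div_mul_eq_mul_div, div_le_div_iff₀ hπ (by norm_num)]
    linarith

lemma abs_U_mul_le {x : ℝ} (hx : 0 ≤ x) : |U x * x| ≤ 1 / 2 := by
  rw [abs_of_nonneg (mul_nonneg (U_nonneg hx) hx)]
  exact U_mul_le hx

lemma tendsto_U_mul : Tendsto (fun x : ℝ => U x * x) atTop (nhds (1 / Real.pi)) := by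
  have hd : HasDerivAt Real.arcsin 1 0 := by
    have := Real.hasDerivAt_arcsin (by norm_num) (by norm_num : (0:ℝ) ≠ 1)
    simpa using this
  have hslope : Tendsto (fun y : ℝ => Real.arcsin y / y) (nhdsWithin 0 {0}ᶜ) (nhds 1) := by
    have := hasDerivAt_iff_tendsto_slope.1 hd
    refine this.congr (fun y => ?_)
    simp [slope_def_field, Real.arcsin_zero, div_eq_mul_inv, mul_comm]
  have h1 : Tendsto (fun x : ℝ => 1 / x) atTop (nhdsWithin 0 {0}ᶜ) := by
    rw [tendsto_nhdsWithin_iff]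
    refine ⟨by simpa using tendsto_inv_atTop_zero, ?_⟩
    filter_upwards [eventually_gt_atTop 0] with x hx
    simp [ne_of_gt, hx.ne']
  have h2 : Tendsto (fun x : ℝ => Real.arcsin (1 / x) / (1 / x)) atTop (nhds 1) :=
    hslope.comp h1
  have h3 : Tendsto (fun x : ℝ => Real.arcsin (1 / x) / (1 / x) / Real.pi) atTop
      (nhds (1 / Real.pi)) := h2.div_const _
  refine h3.congr' ?_
  filter_upwards [eventually_ge_atTop 1] with x hx
  rw [U_eq hx]
  have h0 : x ≠ 0 := by intro h; rw [h] at hx; norm_num at hx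
  field_simp

/-- The `d`-dimensional profile `U^(d)`. -/
noncomputable def Ud (d : ℕ) (r : ℝ) : ℝ :=
  U r - ((d : ℝ) - 2) * ∫ t in Set.Ioi (1:ℝ), U (t * r) * t ^ ((1:ℝ) - d)

lemma integral_rpow_Ioi_one {d : ℕ} (hd : 2 ≤ d) :
    ∫ s in Set.Ioi (1:ℝ), s ^ (-(d:ℝ)) = 1 / ((d:ℝ) - 1) := by
  have hlt : (-(d:ℝ)) < -1 := by
    have : (2:ℝ) ≤ d := by exact_mod_cast hd
    linarith
  rw [integral_Ioi_rpow_of_lt hlt one_pos, Real.one_rpow,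
    show -(d:ℝ) + 1 = -((d:ℝ) - 1) by ring, div_neg, neg_div, neg_neg]

lemma measurable_inner (d : ℕ) :
    Measurable (fun r : ℝ => ∫ t in Set.Ioi (1:ℝ), U (t * r) * t ^ ((1:ℝ) - d)) := by
  have hf : StronglyMeasurable (fun p : ℝ × ℝ => U (p.2 * p.1) * p.2 ^ ((1:ℝ) - d)) := by
    refine Measurable.stronglyMeasurable ?_
    exact (measurable_U.comp (measurable_snd.mul measurable_fst)).mul
      ((show Measurable fun x : ℝ => x ^ ((1:ℝ) - d) by measurability).comp measurable_snd)
  exact (hf.integral_prod_right' (ν := volume.restrict (Set.Ioi 1))).measurable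

lemma measurable_Ud (d : ℕ) : Measurable (Ud d) :=
  measurable_U.sub (measurable_const.mul (measurable_inner d))

lemma inner_bound {d : ℕ} (hd : 2 ≤ d) {t : ℝ} (ht : 0 < t) :
    |∫ s in Set.Ioi (1:ℝ), U (s * t) * s ^ ((1:ℝ) - d)| ≤ 1 / (2 * t) * (1 / ((d:ℝ) - 1)) := by
  have hlt : (-(d:ℝ)) < -1 := by
    have : (2:ℝ) ≤ d := by exact_mod_cast hd
    linarith
  have hbi : IntegrableOn (fun s : ℝ => 1 / (2 * t) * s ^ (-(d:ℝ))) (Set.Ioi 1) :=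
    (integrableOn_Ioi_rpow_of_lt hlt one_pos).const_mul _
  have hb : ∀ᵐ s ∂(volume.restrict (Set.Ioi (1:ℝ))),
      ‖U (s * t) * s ^ ((1:ℝ) - d)‖ ≤ 1 / (2 * t) * s ^ (-(d:ℝ)) := by
    rw [ae_restrict_iff' measurableSet_Ioi]
    filter_upwards with s hs
    have hs1 : (1:ℝ) < s := hs
    have hs0 : (0:ℝ) < s := by linarith
    have hst : 0 ≤ s * t := by positivity
    have hsplit : s ^ ((1:ℝ) - d) = s * s ^ (-(d:ℝ)) := by
      rw [show (1:ℝ) - d = 1 + (-(d:ℝ)) by ring, Real.rpow_add hs0, Real.rpow_one]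
    have hUb : U (s * t) * (s * t) ≤ 1 / 2 := U_mul_le hst
    have hU0 : 0 ≤ U (s * t) := U_nonneg hst
    have hpow : (0:ℝ) < s ^ (-(d:ℝ)) := Real.rpow_pos_of_pos hs0 _
    rw [Real.norm_eq_abs, abs_of_nonneg (by positivity), hsplit]
    rw [div_mul_eq_mul_div, one_mul]
    rw [le_div_iff₀ (by positivity)]
    calc U (s * t) * (s * s ^ (-(d:ℝ))) * (2 * t) = (U (s * t) * (s * t)) * (2 * s ^ (-(d:ℝ))) := by ring
      _ ≤ (1/2) * (2 * s ^ (-(d:ℝ))) := by nlinarith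
      _ = s ^ (-(d:ℝ)) := by ring
  calc |∫ s in Set.Ioi (1:ℝ), U (s * t) * s ^ ((1:ℝ) - d)|
      ≤ ∫ s in Set.Ioi (1:ℝ), 1 / (2 * t) * s ^ (-(d:ℝ)) := by
        refine (norm_integral_le_of_norm_le hbi hb)
    _ = 1 / (2 * t) * (1 / ((d:ℝ) - 1)) := by
        rw [MeasureTheory.integral_const_mul, integral_rpow_Ioi_one hd]

lemma tendsto_inner_mul {d : ℕ} (hd : 2 ≤ d) :
    Tendsto (fun r : ℝ => (∫ s in Set.Ioi (1:ℝ), U (s * r) * s ^ ((1:ℝ) - d)) * r) atTop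
      (nhds (1 / Real.pi * (1 / ((d:ℝ) - 1)))) := by
  have hlt : (-(d:ℝ)) < -1 := by
    have : (2:ℝ) ≤ d := by exact_mod_cast hd
    linarith
  have hmain : Tendsto (fun r : ℝ => ∫ s in Set.Ioi (1:ℝ), U (s * r) * (s * r) * s ^ (-(d:ℝ)))
      atTop (nhds (∫ s in Set.Ioi (1:ℝ), 1 / Real.pi * s ^ (-(d:ℝ)))) := by
    refine tendsto_integral_filter_of_dominated_convergence
      (fun s => 1 / 2 * s ^ (-(d:ℝ))) ?_ ?_ ?_ ?_
    · filter_upwards with r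
      refine Measurable.aestronglyMeasurable ?_
      exact ((measurable_U.comp (measurable_id.mul_const r)).mul
        (measurable_id.mul_const r)).mul
        (show Measurable fun s : ℝ => s ^ (-(d:ℝ)) by measurability)
    · filter_upwards [eventually_ge_atTop (0:ℝ)] with r hr
      rw [ae_restrict_iff' measurableSet_Ioi]
      filter_upwards with s hs
      have hs0 : (0:ℝ) < s := lt_trans one_pos hs
      have hsr : 0 ≤ s * r := by positivity
      have hpow : (0:ℝ) < s ^ (-(d:ℝ)) := Real.rpow_pos_of_pos hs0 _
      rw [Real.norm_eq_abs, abs_mul]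
      calc |U (s * r) * (s * r)| * |s ^ (-(d:ℝ))| ≤ 1 / 2 * |s ^ (-(d:ℝ))| := by
            have := abs_U_mul_le hsr
            have habs : (0:ℝ) ≤ |s ^ (-(d:ℝ))| := abs_nonneg _
            nlinarith
        _ = 1 / 2 * s ^ (-(d:ℝ)) := by rw [abs_of_pos hpow]
    · exact (integrableOn_Ioi_rpow_of_lt hlt one_pos).const_mul _
    · rw [ae_restrict_iff' measurableSet_Ioi]
      filter_upwards with s hs
      have hs0 : (0:ℝ) < s := lt_trans one_pos hs
      have hcomp : Tendsto (fun r : ℝ => U (s * r) * (s * r)) atTop (nhds (1 / Real.pi)) :=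
        tendsto_U_mul.comp (tendsto_id.const_mul_atTop hs0)
      exact hcomp.mul_const _
  have hval : ∫ s in Set.Ioi (1:ℝ), 1 / Real.pi * s ^ (-(d:ℝ))
      = 1 / Real.pi * (1 / ((d:ℝ) - 1)) := by
    rw [MeasureTheory.integral_const_mul, integral_rpow_Ioi_one hd]
  rw [← hval]
  refine hmain.congr' ?_
  filter_upwards [eventually_gt_atTop (0:ℝ)] with r hr
  rw [← MeasureTheory.integral_mul_const]
  refine setIntegral_congr_fun measurableSet_Ioi (fun s hs => ?_)
  have hs0 : (0:ℝ) < s := lt_trans one_pos hs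
  have hsplit : s ^ ((1:ℝ) - d) = s * s ^ (-(d:ℝ)) := by
    rw [show (1:ℝ) - d = 1 + (-(d:ℝ)) by ring, Real.rpow_add hs0, Real.rpow_one]
  rw [hsplit]
  ring

lemma tendsto_Ud_mul {d : ℕ} (hd : 2 ≤ d) :
    Tendsto (fun t : ℝ => Ud d t * t) atTop (nhds (1 / (((d:ℝ) - 1) * Real.pi))) := by
  have h2 : (2:ℝ) ≤ d := by exact_mod_cast hd
  have hπ := Real.pi_pos
  have hgoal : Tendsto (fun t : ℝ =>
      U t * t - ((d:ℝ) - 2) * ((∫ s in Set.Ioi (1:ℝ), U (s * t) * s ^ ((1:ℝ) - d)) * t)) atTop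
      (nhds (1 / Real.pi - ((d:ℝ) - 2) * (1 / Real.pi * (1 / ((d:ℝ) - 1))))) :=
    tendsto_U_mul.sub ((tendsto_inner_mul hd).const_mul _)
  have hval : 1 / Real.pi - ((d:ℝ) - 2) * (1 / Real.pi * (1 / ((d:ℝ) - 1)))
      = 1 / (((d:ℝ) - 1) * Real.pi) := by
    have hne : (d:ℝ) - 1 ≠ 0 := by intro h; rw [sub_eq_zero] at h; rw [h] at h2; norm_num at h2
    field_simp
    ring
  rw [← hval]
  refine hgoal.congr (fun t => ?_)
  simp only [Ud]
  ring

lemma Ud_mul_bound {d : ℕ} (hd : 2 ≤ d) {t : ℝ} (ht : 0 < t) :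
    |Ud d t * t| ≤ t / 2 + 1 := by
  have h2 : (2:ℝ) ≤ d := by exact_mod_cast hd
  have hne : (0:ℝ) < (d:ℝ) - 1 := by linarith
  have hU : |U t| ≤ 1 / 2 := by
    rcases le_or_gt t 1 with h | h
    · rw [U, if_pos h, abs_of_nonneg (by norm_num : (0:ℝ) ≤ 1/2)]
    · rw [U_eq h.le, abs_of_nonneg (div_nonneg (Real.arcsin_nonneg.2 (by positivity))
        Real.pi_pos.le)]
      rw [div_le_iff₀ Real.pi_pos]
      have := Real.arcsin_le_pi_div_two (1 / t)
      linarith [Real.pi_pos]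
  have hinner := inner_bound hd ht
  rw [abs_mul, abs_of_pos ht]
  calc |Ud d t| * t ≤ (1 / 2 + ((d:ℝ) - 2) * (1 / (2 * t) * (1 / ((d:ℝ) - 1)))) * t := by
        have habs : |Ud d t| ≤ |U t| + ((d:ℝ) - 2) *
            |∫ s in Set.Ioi (1:ℝ), U (s * t) * s ^ ((1:ℝ) - d)| := by
          rw [Ud]
          refine (abs_sub _ _).trans ?_
          rw [abs_mul, abs_of_nonneg (by linarith : (0:ℝ) ≤ (d:ℝ) - 2)]
        have h3 : ((d:ℝ) - 2) * |∫ s in Set.Ioi (1:ℝ), U (s * t) * s ^ ((1:ℝ) - d)|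
            ≤ ((d:ℝ) - 2) * (1 / (2 * t) * (1 / ((d:ℝ) - 1))) :=
          mul_le_mul_of_nonneg_left hinner (by linarith)
        nlinarith
    _ = t / 2 + ((d:ℝ) - 2) / ((d:ℝ) - 1) * (1 / 2) := by field_simp
    _ ≤ t / 2 + 1 := by
        have : ((d:ℝ) - 2) / ((d:ℝ) - 1) ≤ 1 := by
          rw [div_le_one hne]; linarith
        linarith

lemma integrableOn_Ud_mul {d : ℕ} (hd : 2 ≤ d) (r : ℝ) :
    IntegrableOn (fun t => Ud d t * t) (Set.Ioc 0 r) := by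
  refine Integrable.mono' (g := fun _ => r / 2 + 1)
    (integrableOn_const measure_Ioc_lt_top.ne)
    (((measurable_Ud d).mul measurable_id).aestronglyMeasurable) ?_
  rw [ae_restrict_iff' measurableSet_Ioc]
  filter_upwards with t ht
  have h1 := Ud_mul_bound hd ht.1
  rw [Real.norm_eq_abs]
  have := ht.2
  linarith

lemma cesaro {f : ℝ → ℝ} {L : ℝ}
    (hint : ∀ r : ℝ, IntegrableOn f (Set.Ioc 0 r))
    (hf : Tendsto f atTop (nhds L)) :
    Tendsto (fun r => (∫ t in (0:ℝ)..r, f t) / r) atTop (nhds L) := by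
  rw [Metric.tendsto_atTop]
  intro ε hε
  obtain ⟨R₀, hR₀⟩ := Metric.tendsto_atTop.1 hf (ε / 2) (by linarith)
  set R : ℝ := max R₀ 0 with hRdef
  have hR0 : 0 ≤ R := le_max_right _ _
  have htail : ∀ t, R < t → |f t - L| ≤ ε / 2 := by
    intro t ht
    have := hR₀ t (le_trans (le_max_left _ _) ht.le)
    rw [Real.dist_eq] at this
    linarith
  set c : ℝ := |(∫ t in (0:ℝ)..R, f t) - L * R| with hcdef
  refine ⟨max (R + 1) (2 * c / ε + 1), fun r hr => ?_⟩
  have hrR : R + 1 ≤ r := le_trans (le_max_left _ _) hr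
  have hrc : 2 * c / ε + 1 ≤ r := le_trans (le_max_right _ _) hr
  have hr0 : 0 < r := by linarith
  have hRr : R ≤ r := by linarith
  have hi1 : IntervalIntegrable f volume 0 R := by
    rw [intervalIntegrable_iff_integrableOn_Ioc_of_le hR0]
    exact hint R
  have hi2 : IntervalIntegrable f volume R r := by
    rw [intervalIntegrable_iff_integrableOn_Ioc_of_le hRr]
    exact (hint r).mono_set (Set.Ioc_subset_Ioc_left hR0)
  have hsplit : (∫ t in (0:ℝ)..r, f t)
      = (∫ t in (0:ℝ)..R, f t) + ∫ t in R..r, f t :=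
    (intervalIntegral.integral_add_adjacent_intervals hi1 hi2).symm
  have hconst : IntervalIntegrable (fun _ : ℝ => L) volume R r := intervalIntegrable_const
  have hi2' : IntervalIntegrable (fun t => f t - L) volume R r := hi2.sub hconst
  have htb : |∫ t in R..r, (f t - L)| ≤ ε / 2 * |r - R| := by
    rw [← Real.norm_eq_abs]
    refine intervalIntegral.norm_integral_le_of_norm_le_const (fun x hx => ?_)
    rw [Set.uIoc_of_le hRr] at hx
    rw [Real.norm_eq_abs]
    exact htail x hx.1
  have hsub : (∫ t in R..r, (f t - L)) = (∫ t in R..r, f t) - L * (r - R) := by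
    rw [intervalIntegral.integral_sub hi2 hconst,
      intervalIntegral.integral_const, smul_eq_mul]
    ring
  rw [Real.dist_eq]
  have key : (∫ t in (0:ℝ)..r, f t) / r - L
      = ((∫ t in (0:ℝ)..R, f t) - L * R) / r + (∫ t in R..r, (f t - L)) / r := by
    rw [hsub, hsplit]
    field_simp
    ring
  rw [key]
  have h1 : |((∫ t in (0:ℝ)..R, f t) - L * R) / r| < ε / 2 := by
    rw [abs_div, abs_of_pos hr0]
    rw [div_lt_iff₀ hr0]
    have hc0 : 0 ≤ c := abs_nonneg _
    calc c < ε / 2 * (2 * c / ε + 1) := by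
          rw [mul_add, mul_one]
          have : ε / 2 * (2 * c / ε) = c := by field_simp
          rw [this]
          linarith
      _ ≤ ε / 2 * r := by nlinarith
  have h2 : |(∫ t in R..r, (f t - L)) / r| ≤ ε / 2 := by
    rw [abs_div, abs_of_pos hr0, div_le_iff₀ hr0]
    calc |∫ t in R..r, (f t - L)| ≤ ε / 2 * |r - R| := htb
      _ ≤ ε / 2 * r := by
          rw [abs_of_nonneg (by linarith)]
          nlinarith
  calc |((∫ t in (0:ℝ)..R, f t) - L * R) / r + (∫ t in R..r, (f t - L)) / r|
      ≤ |((∫ t in (0:ℝ)..R, f t) - L * R) / r| + |(∫ t in R..r, (f t - L)) / r| := abs_add_le _ _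
    _ < ε := by linarith

/-- The volume of the unit sphere `S^{d-1}` in `ℝ^d`. -/
noncomputable def volSphere (d : ℕ) : ℝ :=
  2 * Real.pi ^ ((d : ℝ) / 2) / Real.Gamma ((d : ℝ) / 2)

/-- The `d`-dimensional Shannon density profile `W^(d)`. -/
noncomputable def Wd (d : ℕ) (r : ℝ) : ℝ :=
  (2 / (Real.Gamma ((d : ℝ) - 1) * volSphere d)) * r ^ (-(d : ℝ)) *
    ∫ t in (0:ℝ)..r, Ud d t * t

theorem tendsto_rpow_mul_Wd_atTop (d : ℕ) (hd : 2 ≤ d) :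
    Tendsto (fun r : ℝ => r ^ ((d : ℝ) - 1) * Wd d r) atTop
      (nhds (2 / (Real.Gamma d * Real.pi * volSphere d))) := by
  have h2 : (2:ℝ) ≤ d := by exact_mod_cast hd
  have hπ := Real.pi_pos
  have hdm1 : (0:ℝ) < (d:ℝ) - 1 := by linarith
  set C : ℝ := 2 / (Real.Gamma ((d:ℝ) - 1) * volSphere d) with hC
  have hces : Tendsto (fun r => (∫ t in (0:ℝ)..r, Ud d t * t) / r) atTop
      (nhds (1 / (((d:ℝ) - 1) * Real.pi))) :=
    cesaro (integrableOn_Ud_mul hd) (tendsto_Ud_mul hd)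
  have hmain : Tendsto (fun r => C * ((∫ t in (0:ℝ)..r, Ud d t * t) / r)) atTop
      (nhds (C * (1 / (((d:ℝ) - 1) * Real.pi)))) := hces.const_mul C
  have hval : C * (1 / (((d:ℝ) - 1) * Real.pi))
      = 2 / (Real.Gamma d * Real.pi * volSphere d) := by
    have hΓ : Real.Gamma (d:ℝ) = ((d:ℝ) - 1) * Real.Gamma ((d:ℝ) - 1) := by
      nth_rewrite 1 [show (d:ℝ) = ((d:ℝ) - 1) + 1 by ring]
      rw [Real.Gamma_add_one (by linarith : (d:ℝ) - 1 ≠ 0)]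
    have hΓpos : 0 < Real.Gamma ((d:ℝ) - 1) := Real.Gamma_pos_of_pos (by linarith)
    have hvol : 0 < volSphere d := by
      rw [volSphere]
      have h1 : (0:ℝ) < Real.pi ^ ((d:ℝ) / 2) := Real.rpow_pos_of_pos hπ _
      have h2' : 0 < Real.Gamma ((d:ℝ) / 2) := Real.Gamma_pos_of_pos (by positivity)
      positivity
    rw [hC, hΓ]
    field_simp
  rw [← hval]
  refine hmain.congr' ?_
  filter_upwards [eventually_gt_atTop (0:ℝ)] with r hr
  rw [Wd]
  have hrpow : r ^ ((d:ℝ) - 1) * r ^ (-(d:ℝ)) = r⁻¹ := by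
    rw [← Real.rpow_add hr, show (d:ℝ) - 1 + -(d:ℝ) = -1 by ring, Real.rpow_neg_one]
  rw [← hC]
  calc C * ((∫ t in (0:ℝ)..r, Ud d t * t) / r)
      = C * ((∫ t in (0:ℝ)..r, Ud d t * t) * r⁻¹) := by rw [div_eq_mul_inv]
    _ = C * ((∫ t in (0:ℝ)..r, Ud d t * t) * (r ^ ((d:ℝ) - 1) * r ^ (-(d:ℝ)))) := by
        rw [hrpow]
    _ = r ^ ((d:ℝ) - 1) * (C * r ^ (-(d:ℝ)) * ∫ t in (0:ℝ)..r, Ud d t * t) := by ring
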